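/- In the grid graph G = P_s □ P_t with s, t ≥ 2, if (u_i, v_j) and (u_g, v_h) are distinct vertices with i = g (and hence j ≠ h), then the set of distinctive vertices satisfies |D((u_i,v_j),(u_g,v_h))| ≥ 2s + t − 3. -/

import Mathlib

open SimpleGraph

lemma pathGraph_adj_abs {n : ℕ} {u v : Fin n} (huv : (pathGraph n).Adj u v) :
    ((u : ℤ) - v).natAbs = 1 := by
  rw [pathGraph_adj] at huv
  omega

lemma grid_walk_length_ge {s t : ℕ} {x y : Fin s × Fin t}
    (w : ((pathGraph s).boxProd (pathGraph t)).Walk x y) :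
    ((x.1 : ℤ) - y.1).natAbs + ((x.2 : ℤ) - y.2).natAbs ≤ w.length := by
  induction w with
  | nil => simp
  | cons huv w ih =>
    rename_i a b c
    rw [SimpleGraph.Walk.length_cons]
    rw [boxProd_adj] at huv
    rcases huv with ⟨h1, h2⟩ | ⟨h1, h2⟩
    · have := pathGraph_adj_abs h1
      rw [h2] at *
      omega
    · have := pathGraph_adj_abs h1
      rw [h2] at *
      omega

lemma pathGraph_walk_exists_aux {n : ℕ} :
    ∀ (k : ℕ) (u v : Fin n), u.val + k = v.val →
      ∃ w : (pathGraph n).Walk u v, w.length = k := by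
  intro k
  induction k with
  | zero =>
    intro u v huv
    have huv' : u = v := Fin.ext (by omega)
    subst huv'
    exact ⟨SimpleGraph.Walk.nil, rfl⟩
  | succ k ih =>
    intro u v huv
    have hlt : u.val + 1 < n := by omega
    have hadj : (pathGraph n).Adj u ⟨u.val + 1, hlt⟩ := by rw [pathGraph_adj]; left; rfl
    obtain ⟨w, hw⟩ := ih ⟨u.val + 1, hlt⟩ v (by simp; omega)
    exact ⟨SimpleGraph.Walk.cons hadj w, by simp [hw]⟩

lemma pathGraph_walk_exists {n : ℕ} (u v : Fin n) :
    ∃ w : (pathGraph n).Walk u v, w.length = ((u : ℤ) - v).natAbs := by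
  rcases le_or_gt u.val v.val with hle | hlt
  · obtain ⟨w, hw⟩ := pathGraph_walk_exists_aux (v.val - u.val) u v (by omega)
    exact ⟨w, by omega⟩
  · obtain ⟨w, hw⟩ := pathGraph_walk_exists_aux (u.val - v.val) v u (by omega)
    exact ⟨w.reverse, by rw [SimpleGraph.Walk.length_reverse, hw]; omega⟩

lemma grid_dist {s t : ℕ} (x y : Fin s × Fin t) :
    ((pathGraph s).boxProd (pathGraph t)).dist x y
      = ((x.1 : ℤ) - y.1).natAbs + ((x.2 : ℤ) - y.2).natAbs := by
  obtain ⟨x1, x2⟩ := x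
  obtain ⟨y1, y2⟩ := y
  apply le_antisymm
  · obtain ⟨w1, hw1⟩ := pathGraph_walk_exists x1 y1
    obtain ⟨w2, hw2⟩ := pathGraph_walk_exists x2 y2
    calc ((pathGraph s).boxProd (pathGraph t)).dist (x1, x2) (y1, y2)
        ≤ ((w1.boxProdLeft _ x2).append (w2.boxProdRight _ y1)).length :=
          SimpleGraph.dist_le _
    _ = _ := by
      rw [SimpleGraph.Walk.length_append]
      exact congrArg₂ (· + ·) ((SimpleGraph.Walk.length_map _ w1).trans hw1)
        ((SimpleGraph.Walk.length_map _ w2).trans hw2)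
  · obtain ⟨w, hw⟩ := (((pathGraph_preconnected s).boxProd (pathGraph_preconnected t))
      (x1, x2) (y1, y2)).exists_walk_length_eq_dist
    rw [← hw]
    exact grid_walk_length_ge w

/-- In the grid graph `P_s □ P_t` (`s, t ≥ 2`), two distinct vertices lying in the same row
(i.e. with the same first coordinate) have at least `2s + t - 3` distinctive vertices. -/
theorem grid_distinctive_same_row (s t : ℕ) (hs : 2 ≤ s) (ht : 2 ≤ t)
    (i : Fin s) (j h : Fin t) (hjh : j ≠ h) :
    2 * s + t - 3 ≤
      (Finset.univ.filter (fun z : Fin s × Fin t =>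
        ((SimpleGraph.pathGraph s).boxProd (SimpleGraph.pathGraph t)).dist (i, j) z ≠
          ((SimpleGraph.pathGraph s).boxProd (SimpleGraph.pathGraph t)).dist (i, h) z)).card := by
  classical
  have hjh' : j.val ≠ h.val := fun e => hjh (Fin.ext e)
  set B : Finset (Fin t) :=
    Finset.univ.filter (fun b => ((j : ℤ) - b).natAbs ≠ ((h : ℤ) - b).natAbs) with hB
  have hfilter : (Finset.univ.filter (fun z : Fin s × Fin t =>
        ((SimpleGraph.pathGraph s).boxProd (SimpleGraph.pathGraph t)).dist (i, j) z ≠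
          ((SimpleGraph.pathGraph s).boxProd (SimpleGraph.pathGraph t)).dist (i, h) z))
      = Finset.univ ×ˢ B := by
    ext ⟨a, b⟩
    simp only [Finset.mem_filter, Finset.mem_product, Finset.mem_univ, true_and, hB,
      grid_dist]
    omega
  rw [hfilter, Finset.card_product, Finset.card_univ, Fintype.card_fin]
  set C : Finset (Fin t) :=
    Finset.univ.filter (fun b => ¬ ((j : ℤ) - b).natAbs ≠ ((h : ℤ) - b).natAbs) with hC
  have hBC : B.card + C.card = t := by
    rw [hB, hC, Finset.card_filter_add_card_filter_not, Finset.card_univ,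
      Fintype.card_fin]
  rcases Finset.eq_empty_or_nonempty C with hCe | ⟨b0, hb0⟩
  · have hBt : B.card = t := by rw [hCe] at hBC; simpa using hBC
    rw [hBt]
    have : 2 * s + t ≤ s * t + 3 := by nlinarith
    omega
  · -- C nonempty: midpoint exists, so t ≥ 3 and C has exactly one element
    rw [hC, Finset.mem_filter] at hb0
    have hb0' : 2 * b0.val = j.val + h.val := by
      have := hb0.2
      omega
    have ht3 : 3 ≤ t := by
      have := b0.isLt
      have := j.isLt
      have := h.isLt
      omega
    have hC1 : C.card ≤ 1 := by
      apply Finset.card_le_one.mpr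
      intro a ha b hb
      rw [hC, Finset.mem_filter] at ha hb
      have h1 := ha.2
      have h2 := hb.2
      exact Fin.ext (by omega)
    have hk : t - 1 ≤ B.card := by omega
    have h2 : s * (t - 1) ≤ s * B.card := Nat.mul_le_mul_left _ hk
    have h3 : 2 * s + t ≤ s * (t - 1) + 3 := by
      obtain ⟨u, rfl⟩ := Nat.exists_eq_add_of_le ht3
      have : 3 + u - 1 = u + 2 := by omega
      rw [this]
      nlinarith
    omega
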